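/- Let n ≥ 1, let ξ ∈ ℂⁿ have all coordinates nonzero, and for i = 1,…,n let ωᵢ = n·eᵢ − 𝟙 ∈ ℤⁿ, where eᵢ is the i-th standard basis vector and 𝟙 the all-ones vector. Define h : (ℝ_{>0})ⁿ → ℝ by h(t) = log( Σᵢ₌₁ⁿ Πⱼ₌₁ⁿ (|ξⱼ|/tⱼ)^{ωᵢⱼ} ). Then: (a) for every v ∈ ℝⁿ and every t ∈ (ℝ_{>0})ⁿ, the map s ↦ h(e^{s v₁}t₁, …, e^{s vₙ}tₙ) is convex on ℝ (i.e., h is geodesically convex on (ℝ_{>0})ⁿ); and (b) every minimizer t of h on (ℝ_{>0})ⁿ satisfies |ξᵢ|·tᵢ⁻¹ = |ξⱼ|·tⱼ⁻¹ for all 1 ≤ i,j ≤ n. -/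

import Mathlib

private lemma exp_zpow' (x : ℝ) (k : ℤ) : Real.exp x ^ k = Real.exp (k * x) := by
  rw [← Real.rpow_intCast, ← Real.exp_mul, mul_comm]

private lemma holder2 {ι : Type*} (s : Finset ι) (hs : s.Nonempty) (p q : ι → ℝ)
    (hp : ∀ i ∈ s, 0 < p i) (hq : ∀ i ∈ s, 0 < q i) {la mu : ℝ}
    (hla : 0 ≤ la) (hmu : 0 ≤ mu) (hlm : la + mu = 1) :
    ∑ i ∈ s, p i ^ la * q i ^ mu ≤ (∑ i ∈ s, p i) ^ la * (∑ i ∈ s, q i) ^ mu := by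
  set P := ∑ i ∈ s, p i with hPdef
  set Q := ∑ i ∈ s, q i with hQdef
  have hPpos : 0 < P := Finset.sum_pos hp hs
  have hQpos : 0 < Q := Finset.sum_pos hq hs
  have key : ∑ i ∈ s, (p i / P) ^ la * (q i / Q) ^ mu ≤ 1 := by
    calc ∑ i ∈ s, (p i / P) ^ la * (q i / Q) ^ mu
        ≤ ∑ i ∈ s, (la * (p i / P) + mu * (q i / Q)) := by
          refine Finset.sum_le_sum fun i hi => ?_
          exact Real.geom_mean_le_arith_mean2_weighted hla hmu
            (div_nonneg (hp i hi).le hPpos.le) (div_nonneg (hq i hi).le hQpos.le) hlm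
      _ = la * (∑ i ∈ s, p i / P) + mu * (∑ i ∈ s, q i / Q) := by
          rw [Finset.sum_add_distrib, ← Finset.mul_sum, ← Finset.mul_sum]
      _ = 1 := by
          rw [← Finset.sum_div, ← Finset.sum_div, ← hPdef, ← hQdef,
            div_self hPpos.ne', div_self hQpos.ne', mul_one, mul_one, hlm]
  have expand : ∀ i ∈ s, p i ^ la * q i ^ mu
      = P ^ la * Q ^ mu * ((p i / P) ^ la * (q i / Q) ^ mu) := by
    intro i hi
    rw [Real.div_rpow (hp i hi).le hPpos.le, Real.div_rpow (hq i hi).le hQpos.le]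
    have h1 : (P : ℝ) ^ la ≠ 0 := (Real.rpow_pos_of_pos hPpos la).ne'
    have h2 : (Q : ℝ) ^ mu ≠ 0 := (Real.rpow_pos_of_pos hQpos mu).ne'
    field_simp
  calc ∑ i ∈ s, p i ^ la * q i ^ mu
      = P ^ la * Q ^ mu * ∑ i ∈ s, (p i / P) ^ la * (q i / Q) ^ mu := by
        rw [Finset.mul_sum]; exact Finset.sum_congr rfl expand
    _ ≤ P ^ la * Q ^ mu * 1 := by
        refine mul_le_mul_of_nonneg_left key ?_
        positivity
    _ = P ^ la * Q ^ mu := mul_one _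

private lemma lse_convexOn {ι : Type*} [Fintype ι] [Nonempty ι] (C b : ι → ℝ)
    (hC : ∀ i, 0 < C i) :
    ConvexOn ℝ Set.univ (fun s : ℝ => Real.log (∑ i, C i * Real.exp (b i * s))) := by
  have fpos : ∀ z : ℝ, 0 < ∑ i, C i * Real.exp (b i * z) := fun z =>
    Finset.sum_pos (fun i _ => mul_pos (hC i) (Real.exp_pos _)) Finset.univ_nonempty
  refine ⟨convex_univ, fun x _ y _ la mu hla hmu hlm => ?_⟩
  simp only [smul_eq_mul]
  have key : (∑ i, C i * Real.exp (b i * (la * x + mu * y))) ≤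
      (∑ i, C i * Real.exp (b i * x)) ^ la * (∑ i, C i * Real.exp (b i * y)) ^ mu := by
    have H := holder2 Finset.univ Finset.univ_nonempty
      (fun i => C i * Real.exp (b i * x)) (fun i => C i * Real.exp (b i * y))
      (fun i _ => mul_pos (hC i) (Real.exp_pos _))
      (fun i _ => mul_pos (hC i) (Real.exp_pos _)) hla hmu hlm
    refine le_trans (le_of_eq ?_) H
    refine Finset.sum_congr rfl fun i _ => ?_
    rw [Real.mul_rpow (hC i).le (Real.exp_pos _).le,
      Real.mul_rpow (hC i).le (Real.exp_pos _).le,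
      ← Real.exp_mul, ← Real.exp_mul, mul_mul_mul_comm,
      ← Real.rpow_add (hC i), hlm, Real.rpow_one, ← Real.exp_add]
    congr 1
    ring
  calc Real.log (∑ i, C i * Real.exp (b i * (la * x + mu * y)))
      ≤ Real.log ((∑ i, C i * Real.exp (b i * x)) ^ la
          * (∑ i, C i * Real.exp (b i * y)) ^ mu) :=
        Real.log_le_log (fpos _) key
    _ = la * Real.log (∑ i, C i * Real.exp (b i * x))
        + mu * Real.log (∑ i, C i * Real.exp (b i * y)) := by
        rw [Real.log_mul (Real.rpow_pos_of_pos (fpos x) la).ne'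
          (Real.rpow_pos_of_pos (fpos y) mu).ne',
          Real.log_rpow (fpos x), Real.log_rpow (fpos y)]

/-- **Geodesic convexity and balancing property of the sparse-scaling penalty.**
With `ωᵢ = n·eᵢ − 𝟙 ∈ ℤⁿ` and `h(t) = log(Σᵢ Πⱼ (|ξⱼ|/tⱼ)^{ωᵢⱼ})` on `(ℝ_{>0})ⁿ`:
(a) `s ↦ h(e^{s v} t)` is convex on `ℝ` for every `v ∈ ℝⁿ` and positive `t`; and
(b) every minimizer `t` of `h` on `(ℝ_{>0})ⁿ` satisfies `|ξᵢ| tᵢ⁻¹ = |ξⱼ| tⱼ⁻¹` for all `i, j`. -/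
theorem sparse_scaling_penalty_gconvex_and_balanced (n : ℕ) (hn : 1 ≤ n)
    (ξ : Fin n → ℂ) (hξ : ∀ j, ξ j ≠ 0) :
    let ω : Fin n → Fin n → ℤ := fun i j => (n : ℤ) * (if i = j then 1 else 0) - 1
    let h : (Fin n → ℝ) → ℝ := fun t =>
      Real.log (∑ i, ∏ j, (‖ξ j‖ / t j) ^ ω i j)
    (∀ (v : Fin n → ℝ) (t : Fin n → ℝ), (∀ j, 0 < t j) →
      ConvexOn ℝ Set.univ (fun s : ℝ => h fun j => Real.exp (s * v j) * t j)) ∧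
    (∀ t : Fin n → ℝ, (∀ j, 0 < t j) →
      (∀ t' : Fin n → ℝ, (∀ j, 0 < t' j) → h t ≤ h t') →
      ∀ i j, ‖ξ i‖ * (t i)⁻¹ = ‖ξ j‖ * (t j)⁻¹) := by
  intro ω h
  have hnpos : 0 < n := hn
  haveI : Nonempty (Fin n) := Fin.pos_iff_nonempty.mp hnpos
  have habs : ∀ k, 0 < ‖ξ k‖ := fun k => norm_pos_iff.mpr (hξ k)
  constructor
  · -- part (a)
    intro v t ht
    have hC : ∀ i : Fin n, 0 < ∏ j, (‖ξ j‖ / t j) ^ ω i j := by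
      intro i
      exact Finset.prod_pos fun j _ => zpow_pos (div_pos (habs j) (ht j)) _
    have heq : (fun s : ℝ => h fun j => Real.exp (s * v j) * t j)
        = fun s : ℝ => Real.log (∑ i, (∏ j, (‖ξ j‖ / t j) ^ ω i j)
            * Real.exp ((∑ j, (ω i j : ℝ) * (- v j)) * s)) := by
      funext s
      show Real.log _ = Real.log _
      congr 1
      refine Finset.sum_congr rfl fun i _ => ?_
      have hb : ∀ j, ‖ξ j‖ / (Real.exp (s * v j) * t j)
          = (‖ξ j‖ / t j) * Real.exp (-(s * v j)) := by
        intro j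
        rw [Real.exp_neg]
        field_simp
      simp only [hb]
      rw [Finset.prod_congr rfl (fun j _ => mul_zpow _ _ (ω i j)), Finset.prod_mul_distrib]
      congr 1
      calc ∏ j, Real.exp (-(s * v j)) ^ ω i j
          = ∏ j, Real.exp ((ω i j : ℝ) * -(s * v j)) := by
            exact Finset.prod_congr rfl fun j _ => exp_zpow' _ _
        _ = Real.exp (∑ j, (ω i j : ℝ) * -(s * v j)) := (Real.exp_sum _ _).symm
        _ = Real.exp ((∑ j, (ω i j : ℝ) * - v j) * s) := by
            rw [Finset.sum_mul]
            congr 1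
            exact Finset.sum_congr rfl fun j _ => by ring
    rw [heq]
    exact lse_convexOn _ _ hC
  · -- part (b)
    intro t ht hmin i j
    set a : Fin n → ℝ := fun k => ‖ξ k‖ * (t k)⁻¹ with ha_def
    have ha : ∀ k, 0 < a k := fun k => mul_pos (habs k) (inv_pos.mpr (ht k))
    -- identity: the inner double sum in terms of powers
    have hid : ∀ u : Fin n → ℝ, (∀ k, 0 < u k) →
        ∑ i, ∏ k, (u k) ^ ω i k = (∑ i, (u i) ^ n) * (∏ k, u k)⁻¹ := by
      intro u hu
      rw [Finset.sum_mul]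
      refine Finset.sum_congr rfl fun i _ => ?_
      have : ∀ k : Fin n, (u k) ^ ω i k
          = (u k) ^ ((n : ℤ) * (if i = k then 1 else 0)) * (u k)⁻¹ := by
        intro k
        rw [show ω i k = (n : ℤ) * (if i = k then 1 else 0) - 1 from rfl,
          zpow_sub₀ (hu k).ne', zpow_one, div_eq_mul_inv]
      rw [Finset.prod_congr rfl fun k _ => this k, Finset.prod_mul_distrib,
        Finset.prod_inv_distrib]
      congr 1
      rw [Finset.prod_eq_single i (fun k _ hk => by
        rw [if_neg (Ne.symm hk), mul_zero, zpow_zero]) (fun hi => absurd (Finset.mem_univ i) hi)]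
      rw [if_pos rfl, mul_one, zpow_natCast]
    have hprodpos : 0 < ∏ k, a k := Finset.prod_pos fun k _ => ha k
    have hsumpos : 0 < ∑ k, (a k) ^ n := Finset.sum_pos (fun k _ => pow_pos (ha k) n)
      Finset.univ_nonempty
    -- the minimizer inequality against t' = |ξ|
    have hmin1 := hmin (fun k => ‖ξ k‖) habs
    have hht' : h (fun k => ‖ξ k‖) = Real.log n := by
      show Real.log _ = _
      congr 1
      have : ∀ i : Fin n, ∏ k, (‖ξ k‖ / ‖ξ k‖) ^ ω i k = 1 := by
        intro i
        refine Finset.prod_eq_one fun k _ => ?_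
        rw [div_self (habs k).ne', one_zpow]
      rw [Finset.sum_congr rfl fun i _ => this i]
      simp
    have hht : h t = Real.log ((∑ k, (a k) ^ n) * (∏ k, a k)⁻¹) := by
      show Real.log _ = _
      congr 1
      simpa only [div_eq_mul_inv] using hid a ha
    rw [hht, hht', Real.log_le_log_iff (by positivity) (by exact_mod_cast hnpos)] at hmin1
    have hle : ∑ k, (a k) ^ n ≤ (n : ℝ) * ∏ k, a k := by
      rw [← div_le_iff₀ hprodpos, div_eq_mul_inv]
      exact hmin1
    -- strict AM-GM if not all equal
    by_contra hne
    have hkey : (n : ℝ) * ∏ k, a k < ∑ k, (a k) ^ n := by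
      have hJ := strictConvexOn_exp.map_sum_lt (t := Finset.univ)
        (w := fun _ : Fin n => (n : ℝ)⁻¹) (p := fun k => (n : ℝ) * Real.log (a k))
        (fun _ _ => by positivity)
        (by simp [Finset.card_univ, mul_inv_cancel₀ (by exact_mod_cast hnpos.ne' : (n:ℝ) ≠ 0)])
        (fun _ _ => Set.mem_univ _)
        ⟨i, Finset.mem_univ i, j, Finset.mem_univ j, by
          intro hcon
          apply hne
          have hlog : Real.log (a i) = Real.log (a j) :=
            mul_left_cancel₀ (by exact_mod_cast hnpos.ne' : (n:ℝ) ≠ 0) hcon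
          have := congrArg Real.exp hlog
          rwa [Real.exp_log (ha i), Real.exp_log (ha j)] at this⟩
      simp only [smul_eq_mul] at hJ
      have hL : Real.exp (∑ k, (n : ℝ)⁻¹ * ((n : ℝ) * Real.log (a k))) = ∏ k, a k := by
        rw [Real.exp_sum]
        refine Finset.prod_congr rfl fun k _ => ?_
        rw [← mul_assoc, inv_mul_cancel₀ (by exact_mod_cast hnpos.ne' : (n:ℝ) ≠ 0), one_mul,
          Real.exp_log (ha k)]
      have hR : ∑ k, (n : ℝ)⁻¹ * Real.exp ((n : ℝ) * Real.log (a k))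
          = (n : ℝ)⁻¹ * ∑ k, (a k) ^ n := by
        rw [← Finset.mul_sum]
        congr 1
        refine Finset.sum_congr rfl fun k _ => ?_
        rw [Real.exp_nat_mul, Real.exp_log (ha k)]
      rw [hL, hR] at hJ
      rw [mul_comm, ← lt_div_iff₀ (by exact_mod_cast hnpos : (0:ℝ) < n)]
      rw [div_eq_inv_mul]
      exact hJ
    exact absurd hle (not_le.mpr hkey)
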